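/- Let M ≥ 1 be an integer, let 1 ≤ i ≤ M and j ≥ 0 be integers, let n ≥ 0, and let a_k^{(n)} (k, n ≥ 0) be complex numbers. Then τ_{i+j(M+1)}^{(n)} = (Π_{ℓ=0}^{i−1} G_{ℓ,j+1}^{(n)}) (Π_{ℓ=i}^{M} G_{ℓ,j}^{(n)}). -/

import Mathlib

/-- `G_{i,0}^{(n)} = 1` and, for `j ≥ 1`,
`G_{i,j}^{(n)} = det (a_{i+Ms+ℓ}^{(n)})_{s,ℓ = 0,…,j-1}`. -/
noncomputable def Gdet (M : ℕ) (a : ℕ → ℕ → ℂ) (i j n : ℕ) : ℂ :=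
  Matrix.det (Matrix.of fun s ℓ : Fin j => a (i + M * (s : ℕ) + (ℓ : ℕ)) n)

/-- The tau-function `τ_k^{(n)}` for `k = i + j(M+1)` with `j = k / (M+1)` and
`i = k % (M+1)`: the determinant of the `(j(M+1)+i) × (j(M+1)+i)` block matrix
described in the paper (rows/columns indexed by `(Fin j × Fin (M+1)) ⊕ Fin i`,
where the pair `(p, s)` stands for the row `p(M+1)+s` and `inr s` for the row
`j(M+1)+s`, and similarly for columns). `τ_0^{(n)} = 1`. -/
noncomputable def tau (M : ℕ) (a : ℕ → ℕ → ℂ) (k n : ℕ) : ℂ :=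
  Matrix.det (Matrix.of
    fun rr cc : (Fin (k / (M + 1)) × Fin (M + 1)) ⊕ Fin (k % (M + 1)) =>
      match rr, cc with
      | Sum.inl (p, s), Sum.inl (q, t) =>
          if (s : ℕ) = (t : ℕ) then a ((p : ℕ) * M + (q : ℕ) + (s : ℕ)) n else 0
      | Sum.inl (p, s), Sum.inr t =>
          if (s : ℕ) = (t : ℕ) then a ((p : ℕ) * M + k / (M + 1) + (s : ℕ)) n else 0
      | Sum.inr s, Sum.inl (q, t) =>
          if (s : ℕ) = (t : ℕ) then a ((k / (M + 1)) * M + (q : ℕ) + (s : ℕ)) n else 0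
      | Sum.inr s, Sum.inr t =>
          if (s : ℕ) = (t : ℕ) then a ((k / (M + 1)) * (M + 1) + (s : ℕ)) n else 0)

/-- Reindexing equivalence used to turn the tau matrix into a block matrix. -/
def tauEquiv (M i j : ℕ) (hiM : i ≤ M) :
    ((Fin j × Fin (M + 1)) ⊕ Fin i) ≃ ((Fin (j + 1) × Fin i) ⊕ (Fin j × Fin (M + 1 - i))) where
  toFun rr :=
    match rr with
    | Sum.inl (p, s) =>
        if h : (s : ℕ) < i then Sum.inl (⟨p, by omega⟩, ⟨s, h⟩)
        else Sum.inr (p, ⟨(s : ℕ) - i, by have := s.isLt; omega⟩)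
    | Sum.inr s => Sum.inl (⟨j, by omega⟩, s)
  invFun cc :=
    match cc with
    | Sum.inl (p, s) =>
        if h : (p : ℕ) < j then Sum.inl (⟨p, h⟩, ⟨s, by have := s.isLt; omega⟩)
        else Sum.inr s
    | Sum.inr (p, t) => Sum.inl (p, ⟨i + (t : ℕ), by have := t.isLt; omega⟩)
  left_inv := by
    rintro (⟨p, s⟩ | s)
    · by_cases h : (s : ℕ) < i
      · simp only [dif_pos h, dif_pos p.isLt]
      · simp only [dif_neg h]
        refine congrArg Sum.inl (Prod.ext rfl ?_)
        ext
        simp only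
        omega
    · simp only
      rw [dif_neg (lt_irrefl j)]
  right_inv := by
    rintro (⟨p, s⟩ | ⟨p, t⟩)
    · by_cases h : (p : ℕ) < j
      · simp only [dif_pos h, dif_pos s.isLt]
      · simp only [dif_neg h]
        have hp : (p : ℕ) = j := by have := p.isLt; omega
        exact congrArg Sum.inl (Prod.ext (by ext; simp [hp]) rfl)
    · have ht : ¬ (i + (t : ℕ) < i) := by omega
      simp only [dif_neg ht]
      exact congrArg Sum.inr (Prod.ext rfl (by ext; simp))

set_option maxHeartbeats 1600000 in
/-- Auxiliary form of the main theorem, stated for `k` with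
`k / (M+1) = j` and `k % (M+1) = i`. -/
theorem tau_block_aux (M n : ℕ) (a : ℕ → ℕ → ℂ) (k i j : ℕ)
    (hM : 1 ≤ M) (hi1 : 1 ≤ i) (hiM : i ≤ M)
    (hj : k / (M + 1) = j) (him : k % (M + 1) = i) :
    tau M a k n =
      (∏ ℓ ∈ Finset.range i, Gdet M a ℓ (j + 1) n) *
        ∏ ℓ ∈ Finset.Icc i M, Gdet M a ℓ j n := by
  subst hj him
  set I := k % (M + 1) with hI
  set J := k / (M + 1) with hJ
  set B1 : Fin I → Matrix (Fin (J + 1)) (Fin (J + 1)) ℂ :=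
    fun ℓ => Matrix.of fun p q : Fin (J + 1) => a ((ℓ : ℕ) + M * (p : ℕ) + (q : ℕ)) n with hB1
  set B2 : Fin (M + 1 - I) → Matrix (Fin J) (Fin J) ℂ :=
    fun ℓ => Matrix.of fun p q : Fin J => a ((I + (ℓ : ℕ)) + M * (p : ℕ) + (q : ℕ)) n with hB2
  have ha : ∀ x y : ℕ, x = y → a x n = a y n := fun x y h => by rw [h]
  rw [tau]
  trans Matrix.det ((Matrix.fromBlocks (Matrix.blockDiagonal B1) 0 0
      (Matrix.blockDiagonal B2)).submatrix (tauEquiv M I J hiM) (tauEquiv M I J hiM))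
  · apply congrArg Matrix.det
    ext rr cc
    rcases rr with ⟨p, s⟩ | s <;> rcases cc with ⟨q, t⟩ | t
    · by_cases hs : (s : ℕ) < I <;> by_cases ht : (t : ℕ) < I <;>
        simp [tauEquiv, hs, ht, Matrix.blockDiagonal_apply, Fin.ext_iff, hB1, hB2] <;>
        (try intro h) <;> (try split_ifs) <;>
          first | rfl | omega | (refine ha _ _ ?_; (try simp only [hJ]); first | ((try simp only [Nat.mul_comm M]); omega) | ring) | (exfalso; omega)
    · by_cases hs : (s : ℕ) < I <;>
        simp [tauEquiv, hs, Matrix.blockDiagonal_apply, Fin.ext_iff, hB1, hB2] <;>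
        (try intro h) <;> (try split_ifs) <;>
          first | rfl | omega | (refine ha _ _ ?_; (try simp only [hJ]); first | ((try simp only [Nat.mul_comm M]); omega) | ring) | (exfalso; omega)
    · by_cases ht : (t : ℕ) < I <;>
        simp [tauEquiv, ht, Matrix.blockDiagonal_apply, Fin.ext_iff, hB1, hB2] <;>
        (try intro h) <;> (try split_ifs) <;>
          first | rfl | omega | (refine ha _ _ ?_; (try simp only [hJ]); first | ((try simp only [Nat.mul_comm M]); omega) | ring) | (exfalso; omega)
    · simp [tauEquiv, Matrix.blockDiagonal_apply, Fin.ext_iff, hB1, hB2] <;>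
        (try intro h) <;> (try split_ifs) <;>
          first | rfl | omega | (refine ha _ _ ?_; (try simp only [hJ]); first | ((try simp only [Nat.mul_comm M]); omega) | ring) | (exfalso; omega)
  · rw [Matrix.det_submatrix_equiv_self, Matrix.det_fromBlocks_zero₂₁,
      Matrix.det_blockDiagonal, Matrix.det_blockDiagonal]
    congr 1
    · rw [← Fin.prod_univ_eq_prod_range (fun ℓ => Gdet M a ℓ (J + 1) n) I]
      exact Finset.prod_congr rfl fun kk _ => rfl
    · rw [← Finset.Ico_add_one_right_eq_Icc, Finset.prod_Ico_eq_prod_range]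
      rw [← Fin.prod_univ_eq_prod_range (fun ℓ => Gdet M a (I + ℓ) J n) (M + 1 - I)]
      exact Finset.prod_congr rfl fun kk _ => rfl

/- STATEMENT 6: τ_{i+j(M+1)}^{(n)} = (Π_{ℓ=0}^{i-1} G_{ℓ,j+1}^{(n)}) (Π_{ℓ=i}^{M} G_{ℓ,j}^{(n)}). -/
theorem tau_block_diagonal_offset
    (M i j n : ℕ) (hM : 1 ≤ M) (hi1 : 1 ≤ i) (hiM : i ≤ M) (a : ℕ → ℕ → ℂ) :
    tau M a (i + j * (M + 1)) n =
      (∏ ℓ ∈ Finset.range i, Gdet M a ℓ (j + 1) n) *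
        ∏ ℓ ∈ Finset.Icc i M, Gdet M a ℓ j n := by
  refine tau_block_aux M n a (i + j * (M + 1)) i j hM hi1 hiM ?_ ?_
  · rw [Nat.add_mul_div_right _ _ (Nat.succ_pos M), Nat.div_eq_of_lt (by omega)]
    omega
  · rw [Nat.add_mul_mod_self_right, Nat.mod_eq_of_lt (by omega)]
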